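/- Let S be a semigroup, let L be a list of elements of S, and let a ∈ S be an element whose generated cyclic subsemigroup ⟨a⟩ is finite. Let A(L) denote the set of products, in order, of nonempty subsequences of L. If A(L·a) ∩ E(S) = ∅ (where L·a is L with a appended), then A(L) is a strict subset of A(L·a). -/

import Mathlib

/-- Product, in order, of the nonempty list `a :: l` in a semigroup. -/
def sprod {S : Type*} [Mul S] (a : S) (l : List S) : S := l.foldl (· * ·) a

/-- `pow1 x n = x^(n+1)`: the `(n+1)`-st power of `x` in a semigroup. -/
def pow1 {S : Type*} [Mul S] (x : S) : ℕ → S := fun n => Nat.rec x (fun _ y => y * x) n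

/-- `Π(T)`: the set of products, in order, of nonempty lists which are
permutations of order-preserving sublists of `T`. -/
def PiSet {S : Type*} [Mul S] (T : List S) : Set S :=
  {s | ∃ u : List S, u.Sublist T ∧ ∃ a l, (a :: l).Perm u ∧ sprod a l = s}

/-- `A(L)`: the set of products, in order, of nonempty order-preserving sublists of `L`. -/
def ASet {S : Type*} [Mul S] (L : List S) : Set S :=
  {s | ∃ a l, (a :: l).Sublist L ∧ sprod a l = s}

/-- `HasIndexPeriod x r p` says that `r` is the index of `x` (the least `r > 0` such
that `x^r = x^t` for some positive `t ≠ r`) and `p` is the period of `x` (the least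
`p > 0` with `x^(r+p) = x^r`). Powers are expressed via `pow1 x (n-1) = x^n`. -/
def HasIndexPeriod {S : Type*} [Mul S] (x : S) (r p : ℕ) : Prop :=
  (0 < r ∧ (∃ t, 0 < t ∧ t ≠ r ∧ pow1 x (t - 1) = pow1 x (r - 1)) ∧
    ∀ r', 0 < r' → (∃ t, 0 < t ∧ t ≠ r' ∧ pow1 x (t - 1) = pow1 x (r' - 1)) → r ≤ r') ∧
  (0 < p ∧ pow1 x (r + p - 1) = pow1 x (r - 1) ∧
    ∀ p', 0 < p' → pow1 x (r + p' - 1) = pow1 x (r - 1) → p ≤ p')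

lemma pow1_succ {S : Type*} [Mul S] (x : S) (n : ℕ) : pow1 x (n + 1) = pow1 x n * x := rfl

lemma pow1_add {S : Type*} [Semigroup S] (x : S) (m n : ℕ) :
    pow1 x (m + n + 1) = pow1 x m * pow1 x n := by
  induction n with
  | zero => rfl
  | succ n ih =>
    have h : m + (n + 1) + 1 = (m + n + 1) + 1 := by omega
    rw [h, pow1_succ, ih, pow1_succ, mul_assoc]

lemma exists_idem_pow1 {S : Type*} [Semigroup S] (a : S)
    (hfin : (Set.range (pow1 a)).Finite) :
    ∃ n, pow1 a n * pow1 a n = pow1 a n := by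
  obtain ⟨i, j, hij, heq⟩ : ∃ i j, i < j ∧ pow1 a i = pow1 a j := by
    haveI := hfin.to_subtype
    obtain ⟨x, y, hxy, h⟩ := Finite.exists_ne_map_eq_of_infinite
      (fun n : ℕ => (⟨pow1 a n, Set.mem_range_self n⟩ : Set.range (pow1 a)))
    rcases lt_or_gt_of_ne hxy with h' | h'
    · exact ⟨x, y, h', congrArg Subtype.val h⟩
    · exact ⟨y, x, h', (congrArg Subtype.val h).symm⟩
  set d := j - i with hd
  have hd0 : 0 < d := by omega
  have h0 : ∀ k, pow1 a (i + k * d) = pow1 a i := by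
    intro k
    induction k with
    | zero => simp
    | succ k ih =>
      have hm : (k + 1) * d = k * d + d := by ring
      have h1 : i + (k + 1) * d = (i + k * d) + (d - 1) + 1 := by omega
      have h2 : i + d = i + (d - 1) + 1 := by omega
      calc pow1 a (i + (k + 1) * d) = pow1 a (i + k * d) * pow1 a (d - 1) := by
            rw [h1, pow1_add]
        _ = pow1 a i * pow1 a (d - 1) := by rw [ih]
        _ = pow1 a (i + d) := by rw [h2, pow1_add]
        _ = pow1 a i := by rw [show i + d = j by omega, heq]
  have hkey : ∀ s k, pow1 a (i + s + k * d) = pow1 a (i + s) := by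
    intro s k
    cases s with
    | zero => simpa using h0 k
    | succ s =>
      cases k with
      | zero => simp
      | succ k =>
        have h1 : i + (s + 1) + (k + 1) * d = (i + (k + 1) * d) + s + 1 := by ring
        rw [h1, pow1_add, h0, ← pow1_add]
        rfl
  have hN : i + 1 ≤ (i + 1) * d := Nat.le_mul_of_pos_right (i + 1) hd0
  set N := (i + 1) * d with hNdef
  refine ⟨N - 1, ?_⟩
  set n := N - 1 with hn
  have hni : i ≤ n := by omega
  rw [← pow1_add]
  have h3 : n + n + 1 = i + (n - i) + (i + 1) * d := by omega
  rw [h3, hkey, show i + (n - i) = n by omega]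

lemma ASet_mono {S : Type*} [Mul S] {L M : List S} (h : L.Sublist M) : ASet L ⊆ ASet M := by
  rintro s ⟨b, l, hs, hp⟩
  exact ⟨b, l, hs.trans h, hp⟩

lemma mem_ASet_mul {S : Type*} [Mul S] {L : List S} {s : S} (hs : s ∈ ASet L) (a : S) :
    s * a ∈ ASet (L ++ [a]) := by
  obtain ⟨b, l, hsub, hp⟩ := hs
  refine ⟨b, l ++ [a], ?_, ?_⟩
  · simpa using hsub.append (List.Sublist.refl [a])
  · simp [sprod, List.foldl_append, ← hp]

/-- If `⟨a⟩` is finite and `A(L·a)` contains no idempotent, then `A(L) ⊊ A(L·a)`. -/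
theorem stmt_3 {S : Type*} [Semigroup S]
    (a : S) (hfin : (Set.range (pow1 a)).Finite) (L : List S)
    (hfree : ASet (L ++ [a]) ∩ {e : S | e * e = e} = ∅) :
    ASet L ⊂ ASet (L ++ [a]) := by
  rw [Set.ssubset_def]
  refine ⟨ASet_mono (List.sublist_append_left L [a]), fun hge => ?_⟩
  have hpow : ∀ n, pow1 a n ∈ ASet (L ++ [a]) := by
    intro n
    induction n with
    | zero => exact ⟨a, [], List.sublist_append_right L [a], rfl⟩
    | succ n ih => exact mem_ASet_mul (hge ih) a
  obtain ⟨n, hidem⟩ := exists_idem_pow1 a hfin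
  have hmem : pow1 a n ∈ ASet (L ++ [a]) ∩ {e : S | e * e = e} := ⟨hpow n, hidem⟩
  rw [hfree] at hmem
  exact hmem
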